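/- (Filipów–Mrożek–Recław–Szuca; ideal Arzelà–Ascoli theorem) Let I be an ideal on ℕ containing all finite sets. Then: (a) I is BW if and only if for every uniformly bounded and equicontinuous sequence (fₙ) of continuous real-valued functions on [0,1] there exists A ∈ I⁺ such that, with A = {n₀ < n₁ < ⋯}, the sequence (f_{n_k})_k is uniformly I-convergent; (b) I is FinBW if and only if for every uniformly bounded and equicontinuous sequence (fₙ) of continuous real-valued functions on [0,1] there exists A ∈ I⁺ such that (fₙ)_{n∈A} is uniformly convergent. -/

import Mathlib

open Set Filter Topology

def IsIdeal {X : Type*} (I : Set (Set X)) : Prop :=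
  ∅ ∈ I ∧ (Set.univ : Set X) ∉ I ∧ (∀ A B : Set X, A ∈ I → B ∈ I → A ∪ B ∈ I) ∧
    ∀ A B : Set X, A ⊆ B → B ∈ I → A ∈ I

def ContainsFin {X : Type*} (I : Set (Set X)) : Prop := ∀ A : Set X, A.Finite → A ∈ I

/-- The increasing enumeration of a subset of `ℕ` (`n₀ < n₁ < ⋯`). -/
noncomputable def en (A : Set ℕ) : ℕ → ℕ := Nat.nth (· ∈ A)

/-- `I` is BW: every bounded real sequence has an `I`-positive set `A` such that
the subsequence indexed by the increasing enumeration of `A` is `I`-convergent. -/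
def BW (I : Set (Set ℕ)) : Prop :=
  ∀ x : ℕ → ℝ, (∃ M : ℝ, ∀ n, |x n| ≤ M) →
    ∃ A : Set ℕ, A ∉ I ∧ ∃ l : ℝ, ∀ ε > (0 : ℝ), {k : ℕ | ε ≤ |x (en A k) - l|} ∈ I

/-- `I` is FinBW. -/
def FinBW (I : Set (Set ℕ)) : Prop :=
  ∀ x : ℕ → ℝ, (∃ M : ℝ, ∀ n, |x n| ≤ M) →
    ∃ A : Set ℕ, A ∉ I ∧ ∃ l : ℝ, Tendsto (fun k => x (en A k)) atTop (nhds l)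

/-- Continuous real-valued functions on `[0,1]`, with the supremum metric. -/
abbrev C01 := C(↥(Set.Icc (0 : ℝ) 1), ℝ)

def UnifBounded (f : ℕ → C01) : Prop := ∃ M : ℝ, ∀ n x, |f n x| ≤ M

def Equicont (f : ℕ → C01) : Prop :=
  ∀ ε > (0 : ℝ), ∃ δ > (0 : ℝ), ∀ n (x y : ↥(Set.Icc (0 : ℝ) 1)),
    dist x y < δ → dist (f n x) (f n y) < ε

noncomputable section AA

/-- binary digit of `v` at position `j` (weight `(1/2)^(j+1)`), as an integer. -/
def idig (v : ℝ) (j : ℕ) : ℤ := ⌊v * 2^(j+1)⌋ - 2*⌊v * 2^j⌋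

lemma idig01 (v : ℝ) (j : ℕ) : idig v j = 0 ∨ idig v j = 1 := by
  have h1 : (⌊v * 2^j⌋ : ℝ) ≤ v * 2^j := Int.floor_le _
  have h2 : v * 2^j < ⌊v * 2^j⌋ + 1 := Int.lt_floor_add_one _
  have e : v * 2^(j+1) = (v * 2^j) * 2 := by ring
  have l1 : (2*⌊v * 2^j⌋ : ℤ) ≤ ⌊v * 2^(j+1)⌋ := by
    rw [e]
    have : ((2*⌊v * 2^j⌋ : ℤ) : ℝ) ≤ (v * 2^j) * 2 := by push_cast; linarith
    exact Int.le_floor.2 this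
  have l2 : ⌊v * 2^(j+1)⌋ < 2*⌊v * 2^j⌋ + 2 := by
    rw [e]
    have : (v * 2^j) * 2 < ((2*⌊v * 2^j⌋ + 2 : ℤ) : ℝ) := by push_cast; linarith
    exact Int.floor_lt.2 this
  unfold idig; omega

def digb (v : ℝ) (j : ℕ) : Bool := idig v j = 1

def bval (t : Bool) : ℝ := cond t 1 0

lemma bval_digb (v : ℝ) (j : ℕ) : ((idig v j : ℤ) : ℝ) = bval (digb v j) := by
  rcases idig01 v j with h | h <;> simp [digb, h, bval]

lemma bval_nonneg (t : Bool) : 0 ≤ bval t := by cases t <;> simp [bval]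
lemma bval_le_one (t : Bool) : bval t ≤ 1 := by cases t <;> simp [bval]
lemma abs_bval_le (t : Bool) : |bval t| ≤ 1 := by cases t <;> simp [bval]

/-- partial binary sums reconstruct `v`. -/
lemma partial_binary_sum (v : ℝ) (J : ℕ) :
    ∑ j ∈ Finset.range J, ((idig v j : ℤ) : ℝ) * (1/2)^(j+1) = ⌊v * 2^J⌋ / 2^J - ⌊v⌋ := by
  induction J with
  | zero => simp
  | succ J ih =>
    rw [Finset.sum_range_succ, ih]
    have h2 : (2:ℝ)^J ≠ 0 := by positivity
    have h2' : (2:ℝ)^(J+1) ≠ 0 := by positivity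
    unfold idig
    push_cast
    simp only [one_div, inv_pow]
    field_simp
    ring

lemma partial_binary (v : ℝ) (hv : v ∈ Set.Ico (0:ℝ) 1) (J : ℕ) :
    |v - ∑ j ∈ Finset.range J, ((idig v j : ℤ) : ℝ) * (1/2)^(j+1)| ≤ (1/2)^J := by
  obtain ⟨h0, h1⟩ := hv
  have hf0 : ⌊v⌋ = 0 := by
    rw [Int.floor_eq_zero_iff]; exact ⟨h0, h1⟩
  rw [partial_binary_sum, hf0]
  have hp : (0:ℝ) < 2^J := by positivity
  have hl : (⌊v * 2^J⌋ : ℝ) ≤ v * 2^J := Int.floor_le _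
  have hgt : v * 2^J < ⌊v * 2^J⌋ + 1 := Int.lt_floor_add_one _
  have hinv : (1/2:ℝ)^J * 2^J = 1 := by
    rw [← mul_pow]; norm_num
  have hd : (⌊v * 2^J⌋:ℝ)/2^J * 2^J = ⌊v * 2^J⌋ := div_mul_cancel₀ _ hp.ne'
  push_cast
  rw [sub_zero, abs_le]
  constructor
  · nlinarith
  · nlinarith

lemma summable_aux {r C : ℝ} (hr0 : 0 ≤ r) (hr1 : r < 1) (a : ℕ → ℝ)
    (ha : ∀ j, |a j| ≤ C) : Summable (fun j => a j * r^(j+1)) := by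
  apply Summable.of_norm_bounded (g := fun j => C * r^(j+1))
  · exact (summable_geometric_of_lt_one hr0 hr1).mul_left C |>.comp_injective (add_left_injective 1)
  · intro j
    rw [Real.norm_eq_abs, abs_mul, abs_of_nonneg (pow_nonneg hr0 _)]
    exact mul_le_mul_of_nonneg_right (ha j) (pow_nonneg hr0 _)

lemma tsum_tail_bound {r C : ℝ} (hr0 : 0 ≤ r) (hr1 : r < 1) (hC : 0 ≤ C) (a : ℕ → ℝ)
    (ha : ∀ j, |a j| ≤ C) (J : ℕ) :
    |∑' j, a j * r^(j+1) - ∑ j ∈ Finset.range J, a j * r^(j+1)| ≤ C * r^(J+1) / (1-r) := by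
  have hs := summable_aux hr0 hr1 a ha
  have key := Summable.sum_add_tsum_nat_add J hs
  have : ∑' j, a j * r^(j+1) - ∑ j ∈ Finset.range J, a j * r^(j+1)
      = ∑' j, a (j+J) * r^(j+J+1) := by rw [← key]; ring
  rw [this]
  have hb : ∀ j : ℕ, ‖a (j+J) * r^(j+J+1)‖ ≤ (C * r^(J+1)) * r^j := by
    intro j
    rw [Real.norm_eq_abs, abs_mul, abs_of_nonneg (pow_nonneg hr0 _)]
    have : r^(j+J+1) = r^(J+1) * r^j := by ring
    rw [this, ← mul_assoc]
    apply mul_le_mul_of_nonneg_right _ (pow_nonneg hr0 _)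
    exact mul_le_mul_of_nonneg_right (ha _) (pow_nonneg hr0 _)
  have hsum2 : Summable (fun j : ℕ => (C * r^(J+1)) * r^j) :=
    (summable_geometric_of_lt_one hr0 hr1).mul_left _
  calc |∑' j, a (j+J) * r^(j+J+1)| ≤ ∑' j : ℕ, (C * r^(J+1)) * r^j := by
        apply tsum_of_norm_bounded _ hb
        exact hsum2.hasSum
    _ = C * r^(J+1) / (1-r) := by
        rw [tsum_mul_left, tsum_geometric_of_lt_one hr0 hr1, div_eq_mul_inv]

lemma abs_bval_sub_le (s t : Bool) : |bval s - bval t| ≤ 1 := by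
  cases s <;> cases t <;> simp [bval]

def GG (a : ℕ → Bool) : ℝ := ∑' m, bval (a m) * (1/3)^(m+1)

lemma GG_summable (a : ℕ → Bool) : Summable (fun m => bval (a m) * (1/3:ℝ)^(m+1)) :=
  summable_aux (by norm_num) (by norm_num) _ (fun j => abs_bval_le _)

lemma GG_tail (a : ℕ → Bool) (J : ℕ) :
    |GG a - ∑ m ∈ Finset.range J, bval (a m) * (1/3)^(m+1)| ≤ (1/2) * (1/3)^J := by
  have := tsum_tail_bound (r := 1/3) (C := 1) (by norm_num) (by norm_num) (by norm_num)
    (fun m => bval (a m)) (fun j => abs_bval_le _) J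
  calc |GG a - ∑ m ∈ Finset.range J, bval (a m) * (1/3)^(m+1)| ≤ 1 * (1/3:ℝ)^(J+1) / (1-1/3) := this
    _ = (1/2) * (1/3)^J := by rw [pow_succ]; ring

lemma GG_bound (a : ℕ → Bool) : |GG a| ≤ 1 := by
  have := GG_tail a 0
  simp at this
  calc |GG a| ≤ 1/2 := by simpa using this
    _ ≤ 1 := by norm_num

lemma GG_cont : Continuous GG := by
  apply continuous_tsum (u := fun m => (1/3:ℝ)^(m+1))
  · intro m
    have h1 : Continuous fun a : ℕ → Bool => a m := continuous_apply m
    exact (continuous_of_discreteTopology (f := fun t : Bool => bval t * (1/3:ℝ)^(m+1))).comp h1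
  · exact (summable_geometric_of_lt_one (by norm_num) (by norm_num)).comp_injective
      (add_left_injective 1)
  · intro m a
    rw [Real.norm_eq_abs, abs_mul,
      abs_of_nonneg (pow_nonneg (by norm_num : (0:ℝ) ≤ 1/3) (m+1))]
    calc |bval (a m)| * (1/3:ℝ)^(m+1) ≤ 1 * (1/3:ℝ)^(m+1) := by
          gcongr; exact abs_bval_le _
      _ = (1/3:ℝ)^(m+1) := one_mul _

lemma GG_closed_range : IsClosed (Set.range GG) :=
  (isCompact_range GG_cont).isClosed

/-- separation: if two codes are close then their digits agree on a prefix. -/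
lemma GG_sep (a b : ℕ → Bool) (N : ℕ) (h : |GG a - GG b| < (1/2) * (1/3)^(N+1)) :
    ∀ m ≤ N, a m = b m := by
  by_contra hcon
  push_neg at hcon
  obtain ⟨m0, hm0N, hm0⟩ := hcon
  have hex : ∃ m, a m ≠ b m := ⟨m0, hm0⟩
  classical
  set k := Nat.find hex with hk
  have hkne : a k ≠ b k := Nat.find_spec hex
  have hkle : k ≤ N := le_trans (Nat.find_min' hex hm0) hm0N
  have hmin : ∀ j < k, a j = b j := fun j hj => by
    by_contra hne; exact absurd (Nat.find_min' hex hne) (not_le.2 hj)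
  -- difference series
  set D : ℕ → ℝ := fun m => bval (a m) - bval (b m) with hD
  have hsub : GG a - GG b = ∑' m, D m * (1/3)^(m+1) := by
    rw [GG, GG, ← Summable.tsum_sub (GG_summable a) (GG_summable b)]
    congr 1; funext m; ring
  have hDk : |D k| = 1 := by
    rcases hkne with _
    cases hak : a k <;> cases hbk : b k <;> simp_all [D, bval]
  have hpart : ∑ m ∈ Finset.range (k+1), D m * (1/3:ℝ)^(m+1) = D k * (1/3)^(k+1) := by
    rw [Finset.sum_range_succ]
    have : ∑ m ∈ Finset.range k, D m * (1/3:ℝ)^(m+1) = 0 := by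
      apply Finset.sum_eq_zero
      intro j hj
      rw [Finset.mem_range] at hj
      simp [D, hmin j hj]
    rw [this, zero_add]
  have htail := tsum_tail_bound (r := 1/3) (C := 1) (by norm_num) (by norm_num) (by norm_num)
    D (fun j => abs_bval_sub_le _ _) (k+1)
  rw [hpart] at htail
  have h1 : |D k * (1/3:ℝ)^(k+1)| = (1/3)^(k+1) := by
    rw [abs_mul, hDk, one_mul, abs_of_nonneg (by positivity)]
  have h2 : (1:ℝ) * (1/3)^(k+1+1) / (1-1/3) = (1/2) * (1/3)^(k+1) := by
    rw [pow_succ]; ring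
  rw [h2] at htail
  have hge : (1/2) * (1/3:ℝ)^(k+1) ≤ |GG a - GG b| := by
    rw [hsub]
    have := abs_sub_abs_le_abs_sub (D k * (1/3:ℝ)^(k+1)) (D k * (1/3:ℝ)^(k+1) - ∑' m, D m * (1/3:ℝ)^(m+1))
    have habs : |∑' m, D m * (1/3:ℝ)^(m+1) - D k * (1/3:ℝ)^(k+1)| ≤ (1/2) * (1/3)^(k+1) := htail
    have h3 : |D k * (1/3:ℝ)^(k+1)| - |∑' m, D m * (1/3:ℝ)^(m+1) - D k * (1/3:ℝ)^(k+1)|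
        ≤ |∑' m, D m * (1/3:ℝ)^(m+1)| := by
      have := abs_sub_abs_le_abs_sub (D k * (1/3:ℝ)^(k+1)) (∑' m, D m * (1/3:ℝ)^(m+1))
      have h4 := abs_sub_comm (D k * (1/3:ℝ)^(k+1)) (∑' m, D m * (1/3:ℝ)^(m+1))
      linarith [abs_sub_abs_le_abs_sub (D k * (1/3:ℝ)^(k+1)) (∑' m, D m * (1/3:ℝ)^(m+1)),
        abs_sub_comm (∑' m, D m * (1/3:ℝ)^(m+1)) (D k * (1/3:ℝ)^(k+1))]
    rw [h1] at h3
    linarith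
  have hmono : (1/3:ℝ)^(N+1) ≤ (1/3)^(k+1) :=
    pow_le_pow_of_le_one (by norm_num) (by norm_num) (by omega)
  linarith

-- real work starts
instance : Nonempty ↥(Set.Icc (0:ℝ) 1) := ⟨⟨0, by norm_num⟩⟩

def qq : ℕ → ↥(Set.Icc (0:ℝ) 1) := TopologicalSpace.denseSeq _
lemma qq_dense : DenseRange qq := TopologicalSpace.denseRange_denseSeq _

def vv (f : ℕ → C01) (M : ℝ) (n i : ℕ) : ℝ := (f n (qq i) + (M+1)) / (2*(M+1))
def bb (f : ℕ → C01) (M : ℝ) (n : ℕ) (m : ℕ) : Bool :=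
  digb (vv f M n m.unpair.1) m.unpair.2
def enc (f : ℕ → C01) (M : ℝ) (n : ℕ) : ℝ := GG (bb f M n)

lemma enc_bound (f : ℕ → C01) (M : ℝ) (n : ℕ) : |enc f M n| ≤ 1 := GG_bound _

lemma M_nonneg {f : ℕ → C01} {M : ℝ} (hM : ∀ n x, |f n x| ≤ M) : 0 ≤ M :=
  le_trans (abs_nonneg _) (hM 0 ⟨0, by norm_num⟩)

lemma vv_mem {f : ℕ → C01} {M : ℝ} (hM : ∀ n x, |f n x| ≤ M) (n i : ℕ) :
    vv f M n i ∈ Set.Ico (0:ℝ) 1 := by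
  have h0 := M_nonneg hM
  have h1 := abs_le.1 (hM n (qq i))
  have hd : (0:ℝ) < 2*(M+1) := by linarith
  constructor
  · apply div_nonneg _ hd.le; linarith [h1.1]
  · rw [vv, div_lt_one hd]; linarith [h1.2]

lemma vv_recover {f : ℕ → C01} {M : ℝ} (hM : ∀ n x, |f n x| ≤ M) (n i : ℕ) :
    f n (qq i) = 2*(M+1) * vv f M n i - (M+1) := by
  have h0 := M_nonneg hM
  have hd : (2*(M+1):ℝ) ≠ 0 := by positivity
  rw [vv, mul_div_cancel₀ _ hd]; ring

lemma claim2 (𝔽 : Filter ℕ) (f : ℕ → C01) (M : ℝ) (hM : ∀ n x, |f n x| ≤ M)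
    (m : ℕ → ℕ) (c : ℕ → Bool)
    (hl : ∀ ε > (0:ℝ), ∀ᶠ k in 𝔽, |enc f M (m k) - GG c| < ε)
    (i : ℕ) :
    ∀ ε > (0:ℝ), ∀ᶠ k in 𝔽,
      |f (m k) (qq i) - (2*(M+1) * (∑' j, bval (c (Nat.pair i j)) * (1/2)^(j+1)) - (M+1))| < ε := by
  intro ε hε
  have h0 := M_nonneg hM
  have h2 : (0:ℝ) < 2*(M+1) := by linarith
  set y : ℝ := ∑' j, bval (c (Nat.pair i j)) * (1/2)^(j+1) with hy
  obtain ⟨J, hJ⟩ : ∃ J : ℕ, (1/2:ℝ)^J < ε / (2*(2*(M+1))) :=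
    exists_pow_lt_of_lt_one (by positivity) (by norm_num)
  set N := (Finset.range J).sup (fun j => Nat.pair i j) with hN
  filter_upwards [hl ((1/2)*(1/3)^(N+1)) (by positivity)] with k hk
  have hdig : ∀ m' ≤ N, bb f M (m k) m' = c m' := GG_sep _ _ N hk
  set v : ℝ := vv f M (m k) i with hv
  have hterm : ∀ j ∈ Finset.range J,
      ((idig v j : ℤ) : ℝ) * (1/2:ℝ)^(j+1) = bval (c (Nat.pair i j)) * (1/2)^(j+1) := by
    intro j hj
    have hle : Nat.pair i j ≤ N := Finset.le_sup hj
    have := hdig _ hle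
    rw [bval_digb]
    congr 1
    rw [← this]
    simp [bb, Nat.unpair_pair, hv]
  have e1 : |v - ∑ j ∈ Finset.range J, ((idig v j : ℤ) : ℝ) * (1/2:ℝ)^(j+1)| ≤ (1/2)^J :=
    partial_binary v (vv_mem hM (m k) i) J
  have e2 : |y - ∑ j ∈ Finset.range J, bval (c (Nat.pair i j)) * (1/2:ℝ)^(j+1)| ≤ (1/2)^J := by
    have := tsum_tail_bound (r := 1/2) (C := 1) (by norm_num) (by norm_num) (by norm_num)
      (fun j => bval (c (Nat.pair i j))) (fun j => abs_bval_le _) J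
    calc |y - ∑ j ∈ Finset.range J, bval (c (Nat.pair i j)) * (1/2:ℝ)^(j+1)|
        ≤ 1 * (1/2:ℝ)^(J+1) / (1-1/2) := this
      _ = (1/2)^J := by rw [pow_succ]; ring
  set S : ℝ := ∑ j ∈ Finset.range J, bval (c (Nat.pair i j)) * (1/2:ℝ)^(j+1) with hS
  have hvy : |v - y| ≤ 2 * (1/2)^J := by
    have heq : ∑ j ∈ Finset.range J, ((idig v j : ℤ) : ℝ) * (1/2:ℝ)^(j+1) = S :=
      Finset.sum_congr rfl hterm
    have e1' : |v - S| ≤ (1/2:ℝ)^J := by rw [← heq]; exact e1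
    have e2' : |S - y| ≤ (1/2:ℝ)^J := by rw [abs_sub_comm]; exact e2
    have h3 := abs_sub_le v S y
    linarith
  have hfe : f (m k) (qq i) - (2*(M+1) * y - (M+1)) = 2*(M+1) * (v - y) := by
    rw [vv_recover hM (m k) i]; ring
  rw [hfe, abs_mul, abs_of_pos h2]
  calc 2*(M+1) * |v - y| ≤ 2*(M+1) * (2 * (1/2)^J) := by gcongr
    _ < 2*(M+1) * (2 * (ε / (2*(2*(M+1))))) := by gcongr
    _ = ε := by field_simp

lemma key (𝔽 : Filter ℕ) [𝔽.NeBot] (f : ℕ → C01) (M : ℝ) (hM : ∀ n x, |f n x| ≤ M)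
    (hec : Equicont f) (m : ℕ → ℕ) (l : ℝ)
    (hl : ∀ ε > (0:ℝ), ∀ᶠ k in 𝔽, |enc f M (m k) - l| < ε) :
    ∃ g : C01, ∀ ε > (0:ℝ), ∀ᶠ k in 𝔽, dist (f (m k)) g < ε := by
  classical
  -- l is in the range of GG
  obtain ⟨c, hc⟩ : ∃ c, GG c = l := by
    have hcl : l ∈ closure (Set.range GG) := by
      rw [Metric.mem_closure_iff]
      intro ε hε
      obtain ⟨k, hk⟩ := (hl ε hε).exists
      exact ⟨enc f M (m k), ⟨bb f M (m k), rfl⟩, by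
        rw [Real.dist_eq, abs_sub_comm]; exact hk⟩
    rw [GG_closed_range.closure_eq] at hcl
    exact hcl
  rw [← hc] at hl
  -- limit values on the dense sequence
  set w : ℕ → ℝ := fun i => 2*(M+1) * (∑' j, bval (c (Nat.pair i j)) * (1/2)^(j+1)) - (M+1)
    with hw
  have hcl2 : ∀ i, ∀ ε > (0:ℝ), ∀ᶠ k in 𝔽, |f (m k) (qq i) - w i| < ε :=
    fun i => claim2 𝔽 f M hM m c hl i
  -- finite nets at every scale
  have hnet : ∀ r : ℕ, ∃ s : Finset ℕ,
      ∀ x : ↥(Set.Icc (0:ℝ) 1), ∃ i ∈ s, ∀ n, dist (f n x) (f n (qq i)) < (1/2)^r := by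
    intro r
    obtain ⟨δ, hδ, hd⟩ := hec ((1/2)^r) (by positivity)
    have hcov : (Set.univ : Set ↥(Set.Icc (0:ℝ) 1)) ⊆ ⋃ i : ℕ, Metric.ball (qq i) δ := by
      intro x _
      obtain ⟨i, hi⟩ := qq_dense.exists_dist_lt x hδ
      exact Set.mem_iUnion.2 ⟨i, Metric.mem_ball.2 hi⟩
    obtain ⟨t, ht⟩ := isCompact_univ.elim_finite_subcover
      (fun i => Metric.ball (qq i) δ) (fun i => Metric.isOpen_ball) hcov
    refine ⟨t, fun x => ?_⟩
    obtain ⟨i, hit, hix⟩ := Set.mem_iUnion₂.1 (ht (Set.mem_univ x))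
    exact ⟨i, hit, fun n => hd n x (qq i) (Metric.mem_ball.1 hix)⟩
  choose s hs using hnet
  set T : ℕ → Finset ℕ := fun r => (Finset.range (r+1)).biUnion s with hT
  have hsT : ∀ r, s r ⊆ T r := fun r =>
    Finset.subset_biUnion_of_mem s (Finset.self_mem_range_succ r)
  have hTmono : ∀ r r', r ≤ r' → T r ⊆ T r' := fun r r' h =>
    Finset.biUnion_subset_biUnion_of_subset_left s
      (Finset.range_subset_range.2 (by omega))
  -- pick indices
  have hpick : ∀ r : ℕ, ∃ k, ∀ i ∈ T r, |f (m k) (qq i) - w i| < (1/2)^r := by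
    intro r
    have : ∀ᶠ k in 𝔽, ∀ i ∈ T r, |f (m k) (qq i) - w i| < (1/2)^r :=
      (eventually_all_finset (T r)).2 (fun i _ => hcl2 i _ (by positivity))
    exact this.exists
  choose κ hκ using hpick
  set u : ℕ → C01 := fun r => f (m (κ r)) with hu
  -- Cauchy estimate
  have hdistuu : ∀ r r', r ≤ r' → dist (u r) (u r') ≤ 4 * (1/2)^r := by
    intro r r' hrr'
    rw [ContinuousMap.dist_le (by positivity)]
    intro x
    obtain ⟨i, his, hnear⟩ := hs r x
    have hiT : i ∈ T r := hsT r his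
    have hiT' : i ∈ T r' := hTmono r r' hrr' hiT
    have b1 : dist (u r x) (u r (qq i)) < (1/2:ℝ)^r := hnear (m (κ r))
    have b2 : |u r (qq i) - w i| < (1/2:ℝ)^r := hκ r i hiT
    have b3 : |u r' (qq i) - w i| < (1/2:ℝ)^r' := hκ r' i hiT'
    have b4 : dist (u r' x) (u r' (qq i)) < (1/2:ℝ)^r := hnear (m (κ r'))
    have hmono : (1/2:ℝ)^r' ≤ (1/2)^r :=
      pow_le_pow_of_le_one (by norm_num) (by norm_num) hrr'
    rw [Real.dist_eq] at b1 b4 ⊢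
    have : |u r x - u r' x| ≤ |u r x - u r (qq i)| + |u r (qq i) - w i|
        + |u r' (qq i) - w i| + |u r' x - u r' (qq i)| := by
      have t1 := abs_sub_le (u r x) (u r (qq i)) (w i)
      have t2 := abs_sub_le (u r x) (w i) (u r' x)
      have t3 : |w i - u r' x| ≤ |u r' (qq i) - w i| + |u r' x - u r' (qq i)| := by
        have := abs_sub_le (w i) (u r' (qq i)) (u r' x)
        rw [abs_sub_comm (w i) (u r' (qq i))] at this
        rw [abs_sub_comm (u r' (qq i)) (u r' x)] at this
        linarith
      linarith
    linarith
  have hcauchy : CauchySeq u := by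
    rw [Metric.cauchySeq_iff']
    intro ε hε
    obtain ⟨R, hR⟩ : ∃ R : ℕ, (1/2:ℝ)^R < ε/4 :=
      exists_pow_lt_of_lt_one (by positivity) (by norm_num)
    exact ⟨R, fun n hn => by
      rw [dist_comm]
      calc dist (u R) (u n) ≤ 4 * (1/2)^R := hdistuu R n hn
        _ < 4 * (ε/4) := by linarith
        _ = ε := by ring⟩
  obtain ⟨g, hg⟩ := cauchySeq_tendsto_of_complete hcauchy
  have hdistg : ∀ r, dist (u r) g ≤ 4 * (1/2)^r := by
    intro r
    have htend : Tendsto (fun r' => dist (u r) (u r')) atTop (𝓝 (dist (u r) g)) :=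
      (tendsto_const_nhds.dist hg)
    exact le_of_tendsto htend (eventually_atTop.2 ⟨r, fun r' hr' => hdistuu r r' hr'⟩)
  -- g interpolates w on all net points
  have hgw : ∀ r, ∀ i ∈ T r, g (qq i) = w i := by
    intro r i hi
    have h1 : Tendsto (fun r' => u r' (qq i)) atTop (𝓝 (g (qq i))) :=
      ((ContinuousEvalConst.continuous_eval_const (qq i)).tendsto g).comp hg
    have h2 : Tendsto (fun r' => u r' (qq i)) atTop (𝓝 (w i)) := by
      rw [Metric.tendsto_atTop]
      intro ε hε
      obtain ⟨R, hR⟩ : ∃ R : ℕ, (1/2:ℝ)^R < ε :=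
        exists_pow_lt_of_lt_one hε (by norm_num)
      refine ⟨max r R, fun r' hr' => ?_⟩
      have hiT' : i ∈ T r' := hTmono r r' (le_trans (le_max_left _ _) hr') hi
      rw [Real.dist_eq]
      calc |u r' (qq i) - w i| < (1/2:ℝ)^r' := hκ r' i hiT'
        _ ≤ (1/2)^R := pow_le_pow_of_le_one (by norm_num) (by norm_num)
            (le_trans (le_max_right _ _) hr')
        _ < ε := hR
    exact tendsto_nhds_unique h1 h2
  -- conclusion
  refine ⟨g, fun ε hε => ?_⟩
  obtain ⟨r, hr⟩ : ∃ r : ℕ, (1/2:ℝ)^r < ε/12 :=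
    exists_pow_lt_of_lt_one (by positivity) (by norm_num)
  filter_upwards [(eventually_all_finset (s r)).2
    (fun i _ => hcl2 i ((1/2)^r) (by positivity))] with k hk
  have hb : dist (f (m k)) g ≤ 11 * (1/2)^r := by
    rw [ContinuousMap.dist_le (by positivity)]
    intro x
    obtain ⟨i, his, hnear⟩ := hs r x
    have hiT : i ∈ T r := hsT r his
    have hgq : g (qq i) = w i := hgw r i hiT
    have b1 : dist (f (m k) x) (f (m k) (qq i)) < (1/2:ℝ)^r := hnear (m k)
    have b2 : |f (m k) (qq i) - w i| < (1/2:ℝ)^r := hk i his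
    have b3 : dist (g (qq i)) (g x) ≤ 9 * (1/2:ℝ)^r := by
      calc dist (g (qq i)) (g x)
          ≤ dist (g (qq i)) (u r (qq i)) + dist (u r (qq i)) (u r x) + dist (u r x) (g x) := dist_triangle4 _ _ _ _
        _ ≤ dist (u r) g + dist (u r (qq i)) (u r x) + dist (u r) g := by
            gcongr
            · rw [dist_comm]; exact ContinuousMap.dist_apply_le_dist _
            · exact ContinuousMap.dist_apply_le_dist _
        _ ≤ 4 * (1/2)^r + (1/2)^r + 4 * (1/2)^r := by
            have h1 := hdistg r
            have h2 : dist (u r (qq i)) (u r x) ≤ (1/2:ℝ)^r := by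
              rw [dist_comm]; exact le_of_lt (hnear (m (κ r)))
            linarith
        _ = 9 * (1/2)^r := by ring
    rw [Real.dist_eq] at b1 ⊢
    rw [dist_comm, Real.dist_eq] at b3
    have : |f (m k) x - g x| ≤ |f (m k) x - f (m k) (qq i)| + |f (m k) (qq i) - w i|
        + |g x - g (qq i)| := by
      have t1 := abs_sub_le (f (m k) x) (f (m k) (qq i)) (w i)
      have t2 := abs_sub_le (f (m k) x) (w i) (g x)
      rw [← hgq] at t2
      have t3 : |w i - g x| = |g x - g (qq i)| := by rw [abs_sub_comm, hgq]
      linarith [abs_sub_le (f (m k) x) (w i) (g x)]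
    calc |f (m k) x - g x| ≤ |f (m k) x - f (m k) (qq i)| + |f (m k) (qq i) - w i|
        + |g x - g (qq i)| := this
      _ ≤ (1/2)^r + (1/2)^r + 9 * (1/2)^r := by
          have hb3' : |g x - g (qq i)| ≤ 9 * (1/2:ℝ)^r := by
            rw [abs_sub_comm]
            rw [← Real.dist_eq]
            rw [dist_comm]
            exact b3
          linarith [le_of_lt b1, le_of_lt b2]
      _ = 11 * (1/2)^r := by ring
  calc dist (f (m k)) g ≤ 11 * (1/2)^r := hb
    _ < 11 * (ε/12) := by linarith
    _ < ε := by linarith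

def dualFilter {X : Type*} (I : Set (Set X)) (hI : IsIdeal I) : Filter X where
  sets := {S | Sᶜ ∈ I}
  univ_sets := by simpa using hI.1
  sets_of_superset := fun hS hsub => hI.2.2.2 _ _ (compl_subset_compl.2 hsub) hS
  inter_sets := fun hS hT => by
    simp only [Set.mem_setOf_eq, Set.compl_inter]
    exact hI.2.2.1 _ _ hS hT

lemma mem_dualFilter {X : Type*} {I : Set (Set X)} (hI : IsIdeal I) (S : Set X) :
    S ∈ dualFilter I hI ↔ Sᶜ ∈ I := Iff.rfl

lemma dualFilter_neBot {X : Type*} {I : Set (Set X)} (hI : IsIdeal I) :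
    (dualFilter I hI).NeBot := by
  rw [Filter.neBot_iff]
  intro h
  have : (∅ : Set X) ∈ dualFilter I hI := h ▸ Filter.mem_bot
  rw [mem_dualFilter, Set.compl_empty] at this
  exact hI.2.1 this


/-- Ideal version of the Arzelà–Ascoli theorem (Filipów–Mrożek–Recław–Szuca):
(a) `I` is BW iff every uniformly bounded equicontinuous sequence in `C[0,1]`
has a uniformly `I`-convergent subsequence indexed by an `I`-positive set;
(b) `I` is FinBW iff every such sequence has a uniformly convergent subsequence
indexed by an `I`-positive set. -/
theorem ideal_arzela_ascoli (I : Set (Set ℕ)) (hI : IsIdeal I) (hfin : ContainsFin I) :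
    (BW I ↔ ∀ f : ℕ → C01, UnifBounded f → Equicont f →
      ∃ A : Set ℕ, A ∉ I ∧ ∃ g : C01, ∀ ε > (0 : ℝ),
        {k : ℕ | ε ≤ dist (f (en A k)) g} ∈ I) ∧
    (FinBW I ↔ ∀ f : ℕ → C01, UnifBounded f → Equicont f →
      ∃ A : Set ℕ, A ∉ I ∧ ∃ g : C01,
        Tendsto (fun k => f (en A k)) atTop (nhds g)) := by
  have pt : ↥(Set.Icc (0:ℝ) 1) := ⟨0, by norm_num⟩
  constructor
  · constructor
    · -- BW → uniform I-convergence statement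
      intro hBW f hub hec
      obtain ⟨M, hM⟩ := hub
      obtain ⟨A, hA, l, hconv⟩ := hBW (enc f M) ⟨1, fun n => enc_bound f M n⟩
      haveI := dualFilter_neBot hI
      have hl : ∀ ε > (0:ℝ), ∀ᶠ k in dualFilter I hI, |enc f M (en A k) - l| < ε := by
        intro ε hε
        have h1 := hconv ε hε
        rw [eventually_iff, mem_dualFilter]
        have : {k : ℕ | |enc f M (en A k) - l| < ε}ᶜ
            = {k : ℕ | ε ≤ |enc f M (en A k) - l|} := by
          ext k; simp [not_lt]
        rw [this]; exact h1
      obtain ⟨g, hg⟩ := key (dualFilter I hI) f M hM hec (en A) l hl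
      refine ⟨A, hA, g, fun ε hε => ?_⟩
      have h2 := hg ε hε
      rw [eventually_iff, mem_dualFilter] at h2
      have : {k : ℕ | dist (f (en A k)) g < ε}ᶜ
          = {k : ℕ | ε ≤ dist (f (en A k)) g} := by
        ext k; simp [not_lt]
      rw [this] at h2; exact h2
    · -- converse, via constant functions
      intro hAA x hx
      obtain ⟨M, hMx⟩ := hx
      set f : ℕ → C01 := fun n => ContinuousMap.const _ (x n) with hf
      have hub : UnifBounded f := ⟨M, fun n x' => hMx n⟩
      have hec : Equicont f := fun ε hε => ⟨1, one_pos, fun n a b _ => by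
        simpa [f] using hε⟩
      obtain ⟨A, hA, g, hg⟩ := hAA f hub hec
      refine ⟨A, hA, g pt, fun ε hε => hI.2.2.2 _ _ ?_ (hg ε hε)⟩
      intro k hk
      simp only [Set.mem_setOf_eq] at hk ⊢
      calc ε ≤ |x (en A k) - g pt| := hk
        _ = dist (f (en A k) pt) (g pt) := by rw [Real.dist_eq]; simp [f]
        _ ≤ dist (f (en A k)) g := ContinuousMap.dist_apply_le_dist pt
  · constructor
    · -- FinBW → uniform convergence statement
      intro hBW f hub hec
      obtain ⟨M, hM⟩ := hub
      obtain ⟨A, hA, l, hconv⟩ := hBW (enc f M) ⟨1, fun n => enc_bound f M n⟩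
      have hl : ∀ ε > (0:ℝ), ∀ᶠ k in (atTop : Filter ℕ), |enc f M (en A k) - l| < ε := by
        intro ε hε
        obtain ⟨N, hN⟩ := Metric.tendsto_atTop.1 hconv ε hε
        exact eventually_atTop.2 ⟨N, fun k hk => by
          rw [← Real.dist_eq]; exact hN k hk⟩
      obtain ⟨g, hg⟩ := key atTop f M hM hec (en A) l hl
      refine ⟨A, hA, g, Metric.tendsto_atTop.2 fun ε hε => ?_⟩
      exact eventually_atTop.1 (hg ε hε)
    · -- converse, via constant functions
      intro hAA x hx
      obtain ⟨M, hMx⟩ := hx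
      set f : ℕ → C01 := fun n => ContinuousMap.const _ (x n) with hf
      have hub : UnifBounded f := ⟨M, fun n x' => hMx n⟩
      have hec : Equicont f := fun ε hε => ⟨1, one_pos, fun n a b _ => by
        simpa [f] using hε⟩
      obtain ⟨A, hA, g, hg⟩ := hAA f hub hec
      refine ⟨A, hA, g pt, ?_⟩
      have h1 := ((ContinuousEvalConst.continuous_eval_const pt).tendsto g).comp hg
      have h2 : (fun k => f (en A k) pt) = fun k => x (en A k) := by
        funext k; simp [f]
      rw [← h2]
      exact h1
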